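/- Let S be a string of length n ≥ 2 whose last character $ = S[n] occurs at no other position of S. If w is a nonempty string with occ_S(w) ≥ 2 and (α, $) ∈ Φ_S(w) for some character α, then w is the longest nonempty suffix of S[1..n−1] that occurs at least twice in S, and α = S[n−1−|w|]. In particular, there is at most one nonempty string w with occ_S(w) ≥ 2 whose set Φ_S(w) contains a pair with second component $, and for this w there is at most one such character α. -/

import Mathlib

variable {Γ : Type*} [DecidableEq Γ]

/-- `occ S w` is the number of occurrences of `w` as a contiguous substring of `S`,
i.e., the number of (0-based) indices `i` with `S[i..i+|w|-1] = w`. -/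
def occ (S w : List Γ) : ℕ :=
  ((List.range S.length).filter fun i => (S.drop i).take w.length = w).length

/-- `Phi S w` is the set of pairs `(α, β)` of characters such that
`occ S (αwβ) = occ S (αw) = occ S (wβ) = 1`. -/
def Phi (S w : List Γ) : Set (Γ × Γ) :=
  {p | occ S (p.1 :: (w ++ [p.2])) = 1 ∧ occ S (p.1 :: w) = 1 ∧ occ S (w ++ [p.2]) = 1}

/-- The net frequency of `w` in `S`. -/
noncomputable def phi (S w : List Γ) : ℕ := (Phi S w).ncard

lemma occ_eq (S w : List Γ) :
    occ S w = ((Finset.range S.length).filter fun i => (S.drop i).take w.length = w).card := rfl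

lemma occ_bound {S w : List Γ} {i : ℕ} (hi : i < S.length)
    (h : (S.drop i).take w.length = w) : i + w.length ≤ S.length := by
  have := congrArg List.length h
  simp [List.length_take, List.length_drop] at this
  omega

lemma occ_decomp {S w : List Γ} {i : ℕ} (h : (S.drop i).take w.length = w) :
    S.drop i = w ++ S.drop (i + w.length) := by
  conv_lhs => rw [← List.take_append_drop w.length (S.drop i)]
  rw [h, List.drop_drop]

lemma exists_occ {S w : List Γ} (h : 1 ≤ occ S w) :
    ∃ i, i < S.length ∧ (S.drop i).take w.length = w := by
  rw [occ_eq] at h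
  obtain ⟨i, hi⟩ := Finset.card_pos.mp h
  simp only [Finset.mem_filter, Finset.mem_range] at hi
  exact ⟨i, hi.1, hi.2⟩

lemma occ_le_suffix (S u v : List Γ) (hv : v ≠ []) : occ S (u ++ v) ≤ occ S v := by
  rw [occ_eq, occ_eq]
  apply Finset.card_le_card_of_injOn (fun i => i + u.length)
  · intro i hi
    simp only [Finset.mem_coe, Finset.mem_filter, Finset.mem_range] at hi ⊢
    obtain ⟨hi1, hi2⟩ := hi
    have hb := occ_bound hi1 hi2
    have hvpos : 0 < v.length := List.length_pos_iff.mpr hv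
    simp only [List.length_append] at hb
    constructor
    · omega
    · have hd := occ_decomp hi2
      have : S.drop (i + u.length) = v ++ S.drop (i + (u ++ v).length) := by
        have h1 : S.drop (i + u.length) = (S.drop i).drop u.length := by
          rw [List.drop_drop]
        rw [h1, hd, List.append_assoc, List.drop_left]
      rw [this, List.take_left]
  · intro a _ b _ hab
    simpa using hab

lemma suffix_of_occ {S T : List Γ} {c : Γ} (hS : S = T ++ [c]) (hc : c ∉ T)
    {v : List Γ} {i : ℕ} (hcv : c ∈ v) (hi : i < S.length)
    (h : (S.drop i).take v.length = v) : v <:+ S := by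
  have hd := occ_decomp h
  set r := S.drop (i + v.length) with hr
  have hfull : S = S.take i ++ (v ++ r) := by
    rw [← hd, List.take_append_drop]
  have hcr : c ∉ r := by
    intro hmem
    have h1 : List.count c S = 1 := by
      rw [hS, List.count_append]
      simp [List.count_eq_zero.mpr hc]
    rw [hfull] at h1
    have := List.count_pos_iff.mpr hcv
    have := List.count_pos_iff.mpr hmem
    simp only [List.count_append] at h1
    omega
  have hrnil : r = [] := by
    by_contra hne
    have h1 : S.getLast? = some c := by rw [hS]; exact List.getLast?_concat
    have h2 : S.getLast? = r.getLast? := by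
      conv_lhs => rw [hfull, ← List.append_assoc]
      exact List.getLast?_append_of_ne_nil _ hne
    exact hcr (List.mem_of_mem_getLast? (by rw [← h2, h1]; exact rfl))
  refine ⟨S.take i, ?_⟩
  nth_rewrite 2 [hfull]
  rw [hrnil, List.append_nil]


/-- Let `S = T ++ [c]` where the last character `c` occurs at no other
position of `S` (i.e. `c ∉ T`), with `|S| ≥ 2`. If `w` is a nonempty repeat of `S` and
`(α, c) ∈ Phi S w`, then `w` is the longest nonempty suffix of `T = S[1..n-1]` that
occurs at least twice in `S`, and `α` is the character preceding that suffix
(i.e. `α = S[n-1-|w|]`, expressed as: `αw` is a suffix of `T`). -/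
theorem stmt7 (S T : List Γ) (c : Γ) (hS : S = T ++ [c]) (hc : c ∉ T)
    (hn : 2 ≤ S.length)
    (w : List Γ) (hw : w ≠ []) (hrep : 2 ≤ occ S w)
    (α : Γ) (h : (α, c) ∈ Phi S w) :
    w <:+ T ∧
    (∀ w' : List Γ, w' ≠ [] → w' <:+ T → 2 ≤ occ S w' → w'.length ≤ w.length) ∧
    (α :: w) <:+ T := by
  obtain ⟨h1, h2, h3⟩ := h
  -- w ++ [c] is a suffix of S
  have hwc : w ++ [c] <:+ S := by
    obtain ⟨i, hi, hocc⟩ := exists_occ (le_of_eq h3.symm)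
    exact suffix_of_occ hS hc (by simp) hi hocc
  have hwT : w <:+ T := by
    obtain ⟨p, hp⟩ := hwc
    rw [hS, ← List.append_assoc] at hp
    exact ⟨p, List.append_cancel_right hp⟩
  have hawc : (α :: w) ++ [c] <:+ S := by
    obtain ⟨i, hi, hocc⟩ := exists_occ (le_of_eq h1.symm)
    have : (α :: (w ++ [c])) = (α :: w) ++ [c] := by simp
    rw [this] at hocc
    exact suffix_of_occ hS hc (by simp) hi hocc
  have hawT : (α :: w) <:+ T := by
    obtain ⟨p, hp⟩ := hawc
    rw [hS, ← List.append_assoc] at hp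
    exact ⟨p, List.append_cancel_right hp⟩
  refine ⟨hwT, ?_, hawT⟩
  intro w' hw' hw'T hrep'
  by_contra hlen
  push_neg at hlen
  have hsuf : (α :: w) <:+ w' :=
    List.suffix_of_suffix_length_le hawT hw'T (by simp; omega)
  obtain ⟨u, hu⟩ := hsuf
  have := occ_le_suffix S u (α :: w) (by simp)
  rw [hu] at this
  rw [h2] at this
  omega
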